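/- Let A and B be real d×d matrices. Suppose the symmetrization Aˢ = (A + Aᵀ)/2 is positive definite and B is symmetric, invertible, with exactly one negative eigenvalue. Then AB is invertible and has exactly one negative real eigenvalue, and the geometric multiplicity of that negative eigenvalue is 1. -/

import Mathlib

open Matrix Polynomial Set Filter

namespace Stmt1Aux

variable {d : ℕ}

lemma dot_transpose (A : Matrix (Fin d) (Fin d) ℝ) (x : Fin d → ℝ) :
    x ⬝ᵥ Aᵀ *ᵥ x = x ⬝ᵥ A *ᵥ x := by
  rw [dotProduct_mulVec, vecMul_transpose, dotProduct_comm]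

lemma quad_pos_of_posdef {A : Matrix (Fin d) (Fin d) ℝ}
    (hAs : (((1 : ℝ)/2) • (A + Aᵀ)).PosDef) {x : Fin d → ℝ} (hx : x ≠ 0) :
    0 < x ⬝ᵥ A *ᵥ x := by
  have h := hAs.re_dotProduct_pos hx
  simp only [RCLike.re_to_real, star_trivial, smul_mulVec, dotProduct_smul,
    add_mulVec, dotProduct_add, dot_transpose] at h
  rw [smul_eq_mul] at h; linarith

lemma det_ne_zero_of_quad {M : Matrix (Fin d) (Fin d) ℝ}
    (h : ∀ x : Fin d → ℝ, x ≠ 0 → 0 < x ⬝ᵥ M *ᵥ x) : M.det ≠ 0 := by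
  intro hdet
  obtain ⟨v, hv, hMv⟩ := (Matrix.exists_mulVec_eq_zero_iff).2 hdet
  have := h v hv
  rw [hMv, dotProduct_zero] at this
  exact lt_irrefl 0 this

lemma det_pos_of_posdef_symm_part {A : Matrix (Fin d) (Fin d) ℝ}
    (hAs : (((1 : ℝ)/2) • (A + Aᵀ)).PosDef)
    (hq : ∀ x : Fin d → ℝ, x ≠ 0 → 0 < x ⬝ᵥ A *ᵥ x) : 0 < A.det := by
  set S : Matrix (Fin d) (Fin d) ℝ := ((1 : ℝ)/2) • (A + Aᵀ) with hS
  have hSq : ∀ t : ℝ, ∀ x : Fin d → ℝ, x ≠ 0 → 0 < x ⬝ᵥ (S + t • (A - S)) *ᵥ x := by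
    intro t x hx
    have h1 : x ⬝ᵥ S *ᵥ x = x ⬝ᵥ A *ᵥ x := by
      simp only [hS, smul_mulVec, dotProduct_smul, add_mulVec, dotProduct_add]
      rw [show x ⬝ᵥ Aᵀ *ᵥ x = x ⬝ᵥ A *ᵥ x by
        rw [dotProduct_mulVec, vecMul_transpose, dotProduct_comm]]
      rw [smul_eq_mul]; ring
    have : x ⬝ᵥ (S + t • (A - S)) *ᵥ x
        = x ⬝ᵥ S *ᵥ x + t * (x ⬝ᵥ A *ᵥ x - x ⬝ᵥ S *ᵥ x) := by
      simp only [add_mulVec, dotProduct_add, smul_mulVec, dotProduct_smul,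
        sub_mulVec, dotProduct_sub, smul_eq_mul]
    rw [this, h1]
    simpa using hq x hx
  have hcont : Continuous fun t : ℝ => (S + t • (A - S)).det :=
    (continuous_const.add (continuous_id.smul continuous_const)).matrix_det
  have hne : ∀ t : ℝ, (S + t • (A - S)).det ≠ 0 := fun t => det_ne_zero_of_quad (hSq t)
  have h0 : 0 < (S + (0:ℝ) • (A - S)).det := by
    simpa using hAs.det_pos
  have h1eq : S + (1:ℝ) • (A - S) = A := by simp
  by_contra hle
  push_neg at hle
  have hA1 : (S + (1:ℝ) • (A - S)).det < 0 := by
    rw [h1eq]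
    exact lt_of_le_of_ne hle (by rw [← h1eq]; exact hne 1)
  have : (0:ℝ) ∈ Icc ((S + (1:ℝ) • (A - S)).det) ((S + (0:ℝ) • (A - S)).det) :=
    ⟨le_of_lt hA1, le_of_lt h0⟩
  obtain ⟨t, _, ht⟩ := intermediate_value_Icc' (by norm_num : (0:ℝ) ≤ 1)
    (hcont.continuousOn) this
  exact hne t ht

lemma charpoly_eval (M : Matrix (Fin d) (Fin d) ℝ) (x : ℝ) :
    M.charpoly.eval x = (x • (1 : Matrix (Fin d) (Fin d) ℝ) - M).det := by
  rw [Matrix.charpoly, eval_det, matPolyEquiv_charmatrix]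
  simp [smul_one_eq_diagonal]

lemma exists_neg_eigenvector (M : Matrix (Fin d) (Fin d) ℝ) (hdet : M.det < 0) :
    ∃ μ : ℝ, μ < 0 ∧ ∃ v : Fin d → ℝ, v ≠ 0 ∧ M *ᵥ v = μ • v := by
  have hd : 0 < d := by
    rcases Nat.eq_zero_or_pos d with h | h
    · subst h
      rw [Matrix.det_isEmpty] at hdet; norm_num at hdet
    · exact h
  set p := M.charpoly with hp
  have hmonic : p.Monic := M.charpoly_monic
  have hdeg : p.natDegree = d := by rw [hp, M.charpoly_natDegree_eq_dim, Fintype.card_fin]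
  set r : ℝ[X] := C ((-1 : ℝ)^d) * p.comp (-X) with hr
  have hXdeg : (-X : ℝ[X]).natDegree = 1 := by simp
  have hrdeg : r.natDegree = d := by
    rw [hr, natDegree_C_mul (pow_ne_zero _ (by norm_num) : ((-1 : ℝ)^d) ≠ 0)]
    rw [natDegree_comp, hXdeg, hdeg, mul_one]
  have hrlead : r.leadingCoeff = 1 := by
    rw [hr, leadingCoeff_mul, leadingCoeff_C, leadingCoeff_comp (by rw [hXdeg]; norm_num)]
    have : (-X : ℝ[X]).leadingCoeff = -1 := by simp [leadingCoeff]
    rw [this, hmonic.leadingCoeff, hdeg]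
    simp [← mul_pow]
  have hreval : ∀ x : ℝ, r.eval x = (-1)^d * p.eval (-x) := by
    intro x; rw [hr]; simp [eval_comp]
  have hr0 : r.eval 0 = M.det := by
    rw [hreval, neg_zero, hp, charpoly_eval, zero_smul, zero_sub, Matrix.det_neg]
    simp [← mul_assoc, ← mul_pow]
  have hdegpos : 0 < r.degree := natDegree_pos_iff_degree_pos.1 (by omega)
  have htop : Tendsto (fun x => r.eval x) atTop atTop :=
    r.tendsto_atTop_of_leadingCoeff_nonneg hdegpos (by rw [hrlead]; norm_num)
  obtain ⟨x1, hx1big, hx1pos⟩ :=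
    ((htop.eventually_ge_atTop 1).and (eventually_gt_atTop (0:ℝ))).exists
  have h0m : (0:ℝ) ∈ Icc (r.eval 0) (r.eval x1) := ⟨by rw [hr0]; linarith, by linarith⟩
  obtain ⟨c, hcmem, hc⟩ := intermediate_value_Icc (le_of_lt hx1pos)
    ((Polynomial.continuous r).continuousOn (s := Icc 0 x1)) h0m
  replace hc : eval c r = 0 := hc
  have hcpos : 0 < c := by
    rcases lt_or_eq_of_le hcmem.1 with h | h
    · exact h
    · exfalso
      rw [← h, hr0] at hc
      linarith
  have hpc : p.eval (-c) = 0 := by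
    have h2 := hreval c
    rw [hc] at h2
    have h1 : ((-1:ℝ)^d) ≠ 0 := pow_ne_zero _ (by norm_num)
    exact (mul_eq_zero.1 h2.symm).resolve_left h1
  have hdetc : ((-c) • (1 : Matrix (Fin d) (Fin d) ℝ) - M).det = 0 := by
    rw [← charpoly_eval]; exact hpc
  obtain ⟨v, hv, hveq⟩ := (Matrix.exists_mulVec_eq_zero_iff).2 hdetc
  refine ⟨-c, by linarith, v, hv, ?_⟩
  have h3 : (-c) • v - M *ᵥ v = 0 := by
    rw [← hveq, sub_mulVec, smul_mulVec, one_mulVec]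
  exact (sub_eq_zero.1 h3).symm

lemma transpose_eq_of_hermitian {B : Matrix (Fin d) (Fin d) ℝ} (hB : B.IsHermitian) :
    Bᵀ = B := by
  ext i j
  have := congrFun (congrFun hB i) j
  simpa using this

lemma dot_symm {B : Matrix (Fin d) (Fin d) ℝ} (hBt : Bᵀ = B) (x y : Fin d → ℝ) :
    x ⬝ᵥ B *ᵥ y = y ⬝ᵥ B *ᵥ x := by
  rw [dotProduct_mulVec]
  conv_lhs => rw [← hBt]
  rw [vecMul_transpose, dotProduct_comm]

lemma quad_form_eigen_expansion {B : Matrix (Fin d) (Fin d) ℝ} (hB : B.IsHermitian)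
    (v : Fin d → ℝ) :
    v ⬝ᵥ B *ᵥ v = ∑ i, hB.eigenvalues i
      * ((WithLp.equiv 2 (Fin d → ℝ)) (hB.eigenvectorBasis i) ⬝ᵥ v)^2 := by
  have key := (hB.eigenvectorBasis).sum_inner_mul_inner
      ((WithLp.equiv 2 (Fin d → ℝ)).symm v) ((WithLp.equiv 2 (Fin d → ℝ)).symm (B *ᵥ v))
  simp only [EuclideanSpace.inner_eq_star_dotProduct, star_trivial,
    Equiv.apply_symm_apply, WithLp.equiv_symm_apply, WithLp.ofLp_toLp] at key
  have key' : ∑ x, (v ⬝ᵥ (WithLp.equiv 2 (Fin d → ℝ)) (hB.eigenvectorBasis x))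
      * ((WithLp.equiv 2 (Fin d → ℝ)) (hB.eigenvectorBasis x) ⬝ᵥ B *ᵥ v) = v ⬝ᵥ B *ᵥ v := by
    rw [dotProduct_comm v (B *ᵥ v), ← key]
    exact Finset.sum_congr rfl fun i _ => by
      rw [dotProduct_comm v, dotProduct_comm (B *ᵥ v)] <;> rfl
  rw [← key']
  refine Finset.sum_congr rfl fun i _ => ?_
  set u : Fin d → ℝ := (WithLp.equiv 2 (Fin d → ℝ)) (hB.eigenvectorBasis i) with hu
  have hBu : B *ᵥ u = hB.eigenvalues i • u := by
    simpa [hu] using hB.mulVec_eigenvectorBasis i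
  have h1 : u ⬝ᵥ (B *ᵥ v) = hB.eigenvalues i * (u ⬝ᵥ v) := by
    have h2 : u ᵥ* B = B *ᵥ u := by
      conv_lhs => rw [← transpose_eq_of_hermitian hB]
      rw [vecMul_transpose]
    rw [dotProduct_mulVec, h2, hBu, smul_dotProduct, smul_eq_mul]
  rw [h1, dotProduct_comm v u]
  ring

lemma cs_quad {A : Matrix (Fin d) (Fin d) ℝ}
    (hq : ∀ x : Fin d → ℝ, x ≠ 0 → 0 < x ⬝ᵥ A *ᵥ x) (x y : Fin d → ℝ) :
    (x ⬝ᵥ A *ᵥ y + y ⬝ᵥ A *ᵥ x)^2 ≤ 4 * (x ⬝ᵥ A *ᵥ x) * (y ⬝ᵥ A *ᵥ y) := by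
  have hexp : ∀ t : ℝ, 0 ≤ (x ⬝ᵥ A *ᵥ x) + t * (x ⬝ᵥ A *ᵥ y + y ⬝ᵥ A *ᵥ x)
      + t^2 * (y ⬝ᵥ A *ᵥ y) := by
    intro t
    have h : (x + t • y) ⬝ᵥ A *ᵥ (x + t • y) = (x ⬝ᵥ A *ᵥ x)
        + t * (x ⬝ᵥ A *ᵥ y + y ⬝ᵥ A *ᵥ x) + t^2 * (y ⬝ᵥ A *ᵥ y) := by
      simp only [add_dotProduct, dotProduct_add, mulVec_add, mulVec_smul,
        smul_dotProduct, dotProduct_smul, smul_eq_mul]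
      ring
    rcases eq_or_ne (x + t • y) 0 with h0 | h0
    · rw [← h, h0]; simp
    · rw [← h]; exact le_of_lt (hq _ h0)
  have hd := discrim_le_zero (a := y ⬝ᵥ A *ᵥ y) (b := x ⬝ᵥ A *ᵥ y + y ⬝ᵥ A *ᵥ x)
    (c := x ⬝ᵥ A *ᵥ x) (fun t => by nlinarith [hexp t])
  rw [discrim] at hd
  nlinarith [hd]

lemma eig_neg_quad {A B : Matrix (Fin d) (Fin d) ℝ}
    (hq : ∀ x : Fin d → ℝ, x ≠ 0 → 0 < x ⬝ᵥ A *ᵥ x) (hBdet : B.det ≠ 0)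
    {μ : ℝ} {v : Fin d → ℝ} (hμ : μ < 0) (hv : v ≠ 0)
    (heig : (A * B) *ᵥ v = μ • v) : v ⬝ᵥ B *ᵥ v < 0 := by
  have hw : B *ᵥ v ≠ 0 := fun h => hBdet ((exists_mulVec_eq_zero_iff).1 ⟨v, hv, h⟩)
  have hAw : A *ᵥ (B *ᵥ v) = μ • v := by rw [mulVec_mulVec, heig]
  have hpos := hq _ hw
  rw [hAw, dotProduct_smul, smul_eq_mul, dotProduct_comm] at hpos
  nlinarith [hpos]

end Stmt1Aux

open Stmt1Aux

set_option maxHeartbeats 1000000 in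
theorem stmt_1 (d : ℕ) (A B : Matrix (Fin d) (Fin d) ℝ)
    (hAs : (((1 : ℝ)/2) • (A + Aᵀ)).PosDef)
    (hB : B.IsHermitian) (hBinv : IsUnit B.det)
    (hBneg : (Finset.univ.filter (fun i => hB.eigenvalues i < 0)).card = 1) :
    IsUnit (A * B).det ∧
    (∃! μ : ℝ, μ < 0 ∧ Module.End.HasEigenvalue (Matrix.toLin' (A * B)) μ) ∧
    (∀ μ : ℝ, μ < 0 → Module.End.HasEigenvalue (Matrix.toLin' (A * B)) μ →
      Module.finrank ℝ (Module.End.eigenspace (Matrix.toLin' (A * B)) μ) = 1) := by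
  classical
  have hq : ∀ x : Fin d → ℝ, x ≠ 0 → 0 < x ⬝ᵥ A *ᵥ x := fun x hx => quad_pos_of_posdef hAs hx
  have hdetA : 0 < A.det := det_pos_of_posdef_symm_part hAs hq
  have hdetB : B.det ≠ 0 := hBinv.ne_zero
  -- the unique negative eigenvalue index of B
  obtain ⟨i0, hfil⟩ := Finset.card_eq_one.1 hBneg
  have hlam0 : hB.eigenvalues i0 < 0 := by
    have : i0 ∈ Finset.univ.filter (fun i => hB.eigenvalues i < 0) := by
      rw [hfil]; exact Finset.mem_singleton_self i0
    exact (Finset.mem_filter.1 this).2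
  have hothers : ∀ i : Fin d, i ≠ i0 → 0 ≤ hB.eigenvalues i := by
    intro i hi
    by_contra hneg
    push_neg at hneg
    have : i ∈ Finset.univ.filter (fun i => hB.eigenvalues i < 0) :=
      Finset.mem_filter.2 ⟨Finset.mem_univ i, hneg⟩
    rw [hfil, Finset.mem_singleton] at this
    exact hi this
  -- determinant of B is negative
  have hdetBneg : B.det < 0 := by
    have hprod : B.det = ∏ i, hB.eigenvalues i := by
      simpa using hB.det_eq_prod_eigenvalues
    have hsplit : ∏ i, hB.eigenvalues i
        = hB.eigenvalues i0 * ∏ i ∈ Finset.univ.erase i0, hB.eigenvalues i :=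
      (Finset.mul_prod_erase Finset.univ _ (Finset.mem_univ i0)).symm
    have hrest : 0 ≤ ∏ i ∈ Finset.univ.erase i0, hB.eigenvalues i :=
      Finset.prod_nonneg (fun i hi => hothers i (Finset.ne_of_mem_erase hi))
    have hle : B.det ≤ 0 := by
      rw [hprod, hsplit]
      exact mul_nonpos_of_nonpos_of_nonneg (le_of_lt hlam0) hrest
    exact lt_of_le_of_ne hle hdetB
  have hdetAB : (A * B).det < 0 := by
    rw [det_mul]; exact mul_neg_of_pos_of_neg hdetA hdetBneg
  -- the distinguished coordinate functional
  set u0 : Fin d → ℝ := (WithLp.equiv 2 (Fin d → ℝ)) (hB.eigenvectorBasis i0) with hu0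
  have hphi : ∀ v : Fin d → ℝ, u0 ⬝ᵥ v = 0 → 0 ≤ v ⬝ᵥ B *ᵥ v := by
    intro v hv0
    rw [quad_form_eigen_expansion hB v]
    refine Finset.sum_nonneg fun i _ => ?_
    rcases eq_or_ne i i0 with h | h
    · subst h; rw [← hu0, hv0]; simp
    · exact mul_nonneg (hothers i h) (sq_nonneg _)
  clear_value u0
  -- eigenvalue characterization
  have heig_iff : ∀ μ : ℝ, Module.End.HasEigenvalue (Matrix.toLin' (A * B)) μ ↔
      ∃ v : Fin d → ℝ, v ≠ 0 ∧ (A * B) *ᵥ v = μ • v := by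
    intro μ
    constructor
    · intro h
      obtain ⟨v, hvmem, hvne⟩ := (Submodule.ne_bot_iff _).1 h
      refine ⟨v, hvne, ?_⟩
      have := Module.End.mem_eigenspace_iff.1 hvmem
      rwa [Matrix.toLin'_apply] at this
    · rintro ⟨v, hvne, hveq⟩
      refine Module.End.hasEigenvalue_of_hasEigenvector ⟨?_, hvne⟩
      rw [Module.End.mem_eigenspace_iff, Matrix.toLin'_apply]
      exact hveq
  obtain ⟨μ0, hμ0neg, v0, hv0ne, hv0eig⟩ := exists_neg_eigenvector (A * B) hdetAB
  -- key uniqueness argument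
  have huniq : ∀ μ1 μ2 : ℝ, μ1 < 0 → μ2 < 0 →
      (∃ v : Fin d → ℝ, v ≠ 0 ∧ (A * B) *ᵥ v = μ1 • v) →
      (∃ v : Fin d → ℝ, v ≠ 0 ∧ (A * B) *ᵥ v = μ2 • v) → μ1 = μ2 := by
    intro μ1 μ2 hμ1 hμ2 ⟨v1, hv1, he1⟩ ⟨v2, hv2, he2⟩
    by_contra hne
    have hBt : Bᵀ = B := transpose_eq_of_hermitian hB
    have hT11 : v1 ⬝ᵥ B *ᵥ v1 < 0 := eig_neg_quad hq hdetB hμ1 hv1 he1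
    have hT22 : v2 ⬝ᵥ B *ᵥ v2 < 0 := eig_neg_quad hq hdetB hμ2 hv2 he2
    set T11 := v1 ⬝ᵥ B *ᵥ v1 with hT11def
    set T22 := v2 ⬝ᵥ B *ᵥ v2 with hT22def
    set T12 := v1 ⬝ᵥ B *ᵥ v2 with hT12def
    -- Cauchy-Schwarz in the A-form applied to B v1, B v2
    have hAB1 : A *ᵥ (B *ᵥ v1) = μ1 • v1 := by rw [mulVec_mulVec, he1]
    have hAB2 : A *ᵥ (B *ᵥ v2) = μ2 • v2 := by rw [mulVec_mulVec, he2]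
    have hcross1 : (B *ᵥ v1) ⬝ᵥ A *ᵥ (B *ᵥ v2) = μ2 * T12 := by
      rw [hAB2, dotProduct_smul, smul_eq_mul, dotProduct_comm, dot_symm hBt v2 v1]
    have hcross2 : (B *ᵥ v2) ⬝ᵥ A *ᵥ (B *ᵥ v1) = μ1 * T12 := by
      rw [hAB1, dotProduct_smul, smul_eq_mul, dotProduct_comm, hT12def]
    have hdiag1 : (B *ᵥ v1) ⬝ᵥ A *ᵥ (B *ᵥ v1) = μ1 * T11 := by
      rw [hAB1, dotProduct_smul, smul_eq_mul, dotProduct_comm]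
    have hdiag2 : (B *ᵥ v2) ⬝ᵥ A *ᵥ (B *ᵥ v2) = μ2 * T22 := by
      rw [hAB2, dotProduct_smul, smul_eq_mul, dotProduct_comm]
    have hCS := cs_quad hq (B *ᵥ v1) (B *ᵥ v2)
    rw [hcross1, hcross2, hdiag1, hdiag2] at hCS
    clear_value T11 T22 T12
    -- hCS : (μ2 * T12 + μ1 * T12)^2 ≤ 4 * (μ1 * T11) * (μ2 * T22)
    have hstrict : T12^2 < T11 * T22 := by
      have h4 : 4*μ1*μ2 < (μ1+μ2)^2 := by
        have h0 : μ1 - μ2 ≠ 0 := sub_ne_zero.2 hne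
        have hd2 : (0:ℝ) < (μ1 - μ2)^2 := by positivity
        nlinarith [hd2]
      have hTT : 0 < T11 * T22 := mul_pos_of_neg_of_neg hT11 hT22
      have hsum : 0 < (μ1 + μ2)^2 := by
        have h0 : μ1 + μ2 ≠ 0 := by intro h; nlinarith
        positivity
      have e1 : (μ1+μ2)^2 * T12^2 ≤ (4*μ1*μ2) * (T11*T22) := by nlinarith [hCS]
      have e2 : (4*μ1*μ2) * (T11*T22) < (μ1+μ2)^2 * (T11*T22) :=
        mul_lt_mul_of_pos_right h4 hTT
      exact lt_of_mul_lt_mul_left (lt_of_le_of_lt e1 e2) (le_of_lt hsum)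
    -- build a vector in the span with vanishing u0-coordinate
    rcases eq_or_ne (u0 ⬝ᵥ v1) 0 with hφ1 | hφ1
    · exact absurd (hphi v1 hφ1) (not_le.2 (hT11def ▸ hT11))
    set a : ℝ := u0 ⬝ᵥ v2
    set b : ℝ := -(u0 ⬝ᵥ v1)
    have hbne : b ≠ 0 := neg_ne_zero.2 hφ1
    set w : Fin d → ℝ := a • v1 + b • v2 with hw
    have hφw : u0 ⬝ᵥ w = 0 := by
      rw [hw, dotProduct_add, dotProduct_smul, dotProduct_smul]
      simp only [smul_eq_mul]
      ring
    have hwq : w ⬝ᵥ B *ᵥ w = a^2 * T11 + 2*a*b*T12 + b^2 * T22 := by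
      rw [hw]
      simp only [add_dotProduct, dotProduct_add, mulVec_add, mulVec_smul,
        smul_dotProduct, dotProduct_smul, smul_eq_mul]
      rw [show v2 ⬝ᵥ B *ᵥ v1 = v1 ⬝ᵥ B *ᵥ v2 from dot_symm hBt v2 v1,
        ← hT11def, ← hT22def, ← hT12def]
      ring
    clear_value a b w
    have hwneg : w ⬝ᵥ B *ᵥ w < 0 := by
      rw [hwq]
      have hb2 : 0 < b^2 := by positivity
      have hkey : T11 * (a^2 * T11 + 2*a*b*T12 + b^2 * T22)
          = (a*T11 + b*T12)^2 + b^2*(T11*T22 - T12^2) := by ring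
      have hpos : 0 < T11 * (a^2 * T11 + 2*a*b*T12 + b^2 * T22) := by
        rw [hkey]
        have := mul_pos hb2 (sub_pos.2 hstrict)
        nlinarith [sq_nonneg (a*T11 + b*T12)]
      by_contra hge
      push_neg at hge
      nlinarith [mul_nonpos_of_nonpos_of_nonneg (le_of_lt hT11) hge]
    exact absurd (hphi w hφw) (not_le.2 hwneg)
  refine ⟨isUnit_iff_ne_zero.2 (ne_of_lt hdetAB), ⟨μ0, ⟨hμ0neg, (heig_iff μ0).2 ⟨v0, hv0ne, hv0eig⟩⟩, ?_⟩, ?_⟩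
  · rintro μ' ⟨hμ'neg, hμ'eig⟩
    exact huniq μ' μ0 hμ'neg hμ0neg ((heig_iff μ').1 hμ'eig) ⟨v0, hv0ne, hv0eig⟩
  · intro μ hμneg hμeig
    set E := Module.End.eigenspace (Matrix.toLin' (A * B)) μ with hE
    have hEkey : ∀ v : Fin d → ℝ, v ∈ E → v ≠ 0 → v ⬝ᵥ B *ᵥ v < 0 := by
      intro v hvmem hvne
      have := Module.End.mem_eigenspace_iff.1 hvmem
      rw [Matrix.toLin'_apply] at this
      exact eig_neg_quad hq hdetB hμneg hvne this
    -- the functional v ↦ u0 ⬝ᵥ v as a linear map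
    set φ : (Fin d → ℝ) →ₗ[ℝ] ℝ :=
      { toFun := fun v => u0 ⬝ᵥ v
        map_add' := fun x y => dotProduct_add u0 x y
        map_smul' := fun c x => by simp [dotProduct_smul] } with hφdef
    have hψinj : Function.Injective (φ.comp E.subtype) := by
      rw [← LinearMap.ker_eq_bot]
      rw [Submodule.eq_bot_iff]
      rintro ⟨v, hvmem⟩ hv0
      have hvφ : u0 ⬝ᵥ v = 0 := hv0
      ext
      by_contra hvne
      have h1 := hEkey v hvmem (fun h => hvne (by simp [h]))
      exact absurd (hphi v hvφ) (not_le.2 h1)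
    have hle1 : Module.finrank ℝ E ≤ 1 := by
      have := LinearMap.finrank_le_finrank_of_injective hψinj
      simpa using this
    have hge1 : 0 < Module.finrank ℝ E := by
      rw [Module.finrank_pos_iff]
      exact Submodule.nontrivial_iff_ne_bot.2 hμeig
    omega
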